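/- Let A and H be groups, φ : A →* H an injective homomorphism, n : ℕ, and let G = Monoid.PushoutI (fun _ : Fin n => φ) be the star of isomorphic groups with n rays, with ray-permuting homomorphisms Φ σ : G →* G for σ : Equiv.Perm (Fin n). Suppose g ∈ G admits a reduced word datum of length ≥ 1 whose first index is i : Fin n. Let σ and τ be permutations of Fin n, each equal either to the identity or to a transposition Equiv.swap i j for some j ≠ i, and suppose σ ≠ τ. Then for every a ∈ A, Φ σ g ≠ Φ τ g * base a. -/

import Mathlib

open Monoid

/-- A reduced word datum of length `l.length` for an element `g` of the star of isomorphic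
groups `Monoid.PushoutI (fun _ : Fin n => φ)`. -/
def IsReducedDatum {A H : Type*} [Group A] [Group H] {n : ℕ} (φ : A →* H)
    (g : Monoid.PushoutI (fun _ : Fin n => φ)) (a : A) (l : List (Fin n × H)) : Prop :=
  (∀ p ∈ l, p.2 ∉ Set.range φ) ∧
  l.Chain' (fun p q => p.1 ≠ q.1) ∧
  g = Monoid.PushoutI.base (fun _ : Fin n => φ) a *
      (l.map fun p => Monoid.PushoutI.of (φ := fun _ : Fin n => φ) p.1 p.2).prod

/-- The claim proved in the final case of Lemma 3.3 (OrbitsCosets): if `g` is a reduced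
word of length `≥ 1` whose first letter lies in the factor indexed by `i`, and `σ ≠ τ` are
permutations each equal to the identity or to a transposition moving `i`, then
`Φ σ g ≠ Φ τ g * base a` for every `a` in the amalgamated subgroup. -/
theorem aux_base_fixed {A H : Type*} [Group A] [Group H] {n : ℕ} (φ : A →* H)
    (Φ : Equiv.Perm (Fin n) →
      (Monoid.PushoutI (fun _ : Fin n => φ) →* Monoid.PushoutI (fun _ : Fin n => φ)))
    (hΦ : ∀ (σ : Equiv.Perm (Fin n)) (i : Fin n),
      (Φ σ).comp (Monoid.PushoutI.of (φ := fun _ : Fin n => φ) i) =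
        Monoid.PushoutI.of (φ := fun _ : Fin n => φ) (σ i))
    (σ : Equiv.Perm (Fin n)) (i : Fin n) (b : A) :
    Φ σ (Monoid.PushoutI.base (fun _ : Fin n => φ) b)
      = Monoid.PushoutI.base (fun _ : Fin n => φ) b := by
  conv_lhs => rw [← Monoid.PushoutI.of_apply_eq_base (fun _ : Fin n => φ) i b]
  have := DFunLike.congr_fun (hΦ σ i) (φ b)
  simp only [MonoidHom.comp_apply] at this
  rw [this, Monoid.PushoutI.of_apply_eq_base]

theorem swap_images_differ_mod_base {A H : Type*} [Group A] [Group H]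
    (φ : A →* H) (hφ : Function.Injective φ) (n : ℕ)
    (Φ : Equiv.Perm (Fin n) →
      (Monoid.PushoutI (fun _ : Fin n => φ) →* Monoid.PushoutI (fun _ : Fin n => φ)))
    (hΦ : ∀ (σ : Equiv.Perm (Fin n)) (i : Fin n),
      (Φ σ).comp (Monoid.PushoutI.of (φ := fun _ : Fin n => φ) i) =
        Monoid.PushoutI.of (φ := fun _ : Fin n => φ) (σ i))
    (g : Monoid.PushoutI (fun _ : Fin n => φ)) (b : A) (l : List (Fin n × H))
    (hlen : 1 ≤ l.length)
    (hred : IsReducedDatum φ g b l)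
    (i : Fin n) (hfirst : l.head?.map Prod.fst = some i)
    (σ τ : Equiv.Perm (Fin n))
    (hσ : σ = 1 ∨ ∃ j : Fin n, j ≠ i ∧ σ = Equiv.swap i j)
    (hτ : τ = 1 ∨ ∃ j : Fin n, j ≠ i ∧ τ = Equiv.swap i j)
    (hστ : σ ≠ τ) :
    ∀ a : A, Φ σ g ≠ Φ τ g * Monoid.PushoutI.base (fun _ : Fin n => φ) a := by
  intro a heq
  obtain ⟨hnr, hchain, hprod⟩ := hred
  obtain ⟨p₀, rest, rfl⟩ : ∃ p rest, l = p :: rest := by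
    cases l with
    | nil => simp at hlen
    | cons p rest => exact ⟨p, rest, rfl⟩
  set l : List (Fin n × H) := p₀ :: rest with hl
  have hp₀ : p₀.1 = i := by simpa [hl] using hfirst
  -- σ i ≠ τ i
  have hστi : σ i ≠ τ i := by
    rcases hσ with rfl | ⟨j, hj, rfl⟩ <;> rcases hτ with rfl | ⟨j', hj', rfl⟩
    · exact absurd rfl hστ
    · simpa [Equiv.swap_apply_left] using hj'.symm
    · simpa [Equiv.swap_apply_left] using hj
    · simp only [Equiv.swap_apply_left]
      intro h
      exact hστ (by rw [h])
  -- image of g under Φ ρ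
  have himg : ∀ ρ : Equiv.Perm (Fin n), Φ ρ g =
      Monoid.PushoutI.base (fun _ : Fin n => φ) b *
        (l.map fun p => Monoid.PushoutI.of (φ := fun _ : Fin n => φ) (ρ p.1) p.2).prod := by
    intro ρ
    rw [hprod, map_mul, aux_base_fixed φ Φ hΦ ρ i, map_list_prod, List.map_map]
    congr 1
    refine congrArg List.prod (List.map_congr_left ?_)
    intro p _
    exact DFunLike.congr_fun (hΦ ρ p.1) p.2
  -- the combined list
  set L₁ : List (Fin n × H) := (l.map fun p => (τ p.1, p.2⁻¹)).reverse with hL₁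
  set L₂ : List (Fin n × H) := l.map fun p => (σ p.1, p.2) with hL₂
  set L : List (Fin n × H) := L₁ ++ L₂ with hL
  have hmemL : ∀ p ∈ L, ∃ q ∈ l, p.2 = q.2 ∨ p.2 = q.2⁻¹ := by
    intro p hp
    rcases List.mem_append.1 hp with h | h
    · rcases List.mem_map.1 (List.mem_reverse.1 h) with ⟨q, hq, rfl⟩
      exact ⟨q, hq, Or.inr rfl⟩
    · rcases List.mem_map.1 h with ⟨q, hq, rfl⟩
      exact ⟨q, hq, Or.inl rfl⟩
  have hLnotrange : ∀ p ∈ L, p.2 ∉ Set.range φ := by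
    intro p hp hmem
    obtain ⟨q, hq, h | h⟩ := hmemL p hp
    · rw [h] at hmem
      exact hnr q hq hmem
    · rw [h] at hmem
      rcases hmem with ⟨y, hy⟩
      exact hnr q hq ⟨y⁻¹, by rw [map_inv, hy, inv_inv]⟩
  have hLne1 : ∀ p ∈ L, p.2 ≠ 1 := by
    intro p hp h1
    exact hLnotrange p hp ⟨1, by simp [h1]⟩
  -- chain condition
  have hchainL : L.Chain' (fun p q => p.1 ≠ q.1) := by
    unfold List.Chain' at hchain ⊢
    rw [hL, List.isChain_append]
    refine ⟨?_, ?_, ?_⟩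
    · rw [hL₁, List.isChain_reverse]
      refine List.isChain_map_of_isChain _ ?_ hchain
      intro p q h hc
      exact h (τ.injective hc).symm
    · rw [hL₂]
      refine List.isChain_map_of_isChain _ ?_ hchain
      intro p q h hc
      exact h (σ.injective hc)
    · intro x hx y hy
      rw [hL₁, List.getLast?_reverse, List.head?_map, hl] at hx
      rw [hL₂, List.head?_map, hl] at hy
      simp only [List.head?_cons, Option.map_some, Option.mem_def, Option.some.injEq] at hx hy
      subst hx; subst hy
      simpa [hp₀] using fun h => hστi h.symm
  -- build the CoprodI word
  classical
  let w : Monoid.CoprodI.Word (fun _ : Fin n => H) :=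
    ⟨L.map fun p => ⟨p.1, p.2⟩,
     by
       intro x hx
       rcases List.mem_map.1 hx with ⟨p, hp, rfl⟩
       exact hLne1 p hp,
     by
       refine List.isChain_map_of_isChain _ ?_ hchainL
       intro p q h
       exact h⟩
  have hwred : Monoid.PushoutI.Reduced (fun _ : Fin n => φ) w := by
    intro x hx
    rcases List.mem_map.1 hx with ⟨p, hp, rfl⟩
    intro hmem
    exact hLnotrange p hp (by rcases hmem with ⟨y, hy⟩; exact ⟨y, hy⟩)
  have hwprod : Monoid.PushoutI.ofCoprodI (φ := fun _ : Fin n => φ) w.prod =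
      (L.map fun p => Monoid.PushoutI.of (φ := fun _ : Fin n => φ) p.1 p.2).prod := by
    rw [Monoid.CoprodI.Word.prod, map_list_prod, List.map_map, List.map_map]
    congr 1
  -- compute the product over L
  have h2 : (L₂.map fun p => Monoid.PushoutI.of (φ := fun _ : Fin n => φ) p.1 p.2).prod =
      (l.map fun p => Monoid.PushoutI.of (φ := fun _ : Fin n => φ) (σ p.1) p.2).prod := by
    rw [hL₂, List.map_map]; rfl
  have h1 : (L₁.map fun p => Monoid.PushoutI.of (φ := fun _ : Fin n => φ) p.1 p.2).prod =
      ((l.map fun p => Monoid.PushoutI.of (φ := fun _ : Fin n => φ) (τ p.1) p.2).prod)⁻¹ := by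
    rw [hL₁, List.map_reverse, List.map_map, List.prod_inv_reverse, List.map_map]
    refine congrArg List.prod (congrArg List.reverse ?_)
    refine List.map_congr_left ?_
    intro p _
    simp
  have hLprod : (L.map fun p => Monoid.PushoutI.of (φ := fun _ : Fin n => φ) p.1 p.2).prod =
      (Φ τ g)⁻¹ * Φ σ g := by
    rw [hL, List.map_append, List.prod_append, h1, h2, himg σ, himg τ]
    group
  have hmem : Monoid.PushoutI.ofCoprodI (φ := fun _ : Fin n => φ) w.prod ∈
      (Monoid.PushoutI.base (fun _ : Fin n => φ)).range := by
    rw [hwprod, hLprod, heq]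
    exact ⟨a, by group⟩
  have hempty := hwred.eq_empty_of_mem_range (fun _ => hφ) hmem
  have hLnil : L = [] := by
    have h := congrArg Monoid.CoprodI.Word.toList hempty
    simpa [w, Monoid.CoprodI.Word.empty] using h
  have := congrArg List.length hLnil
  simp [hL, hL₁, hL₂, hl] at this
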